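/- Every O_X-module M on a ringed space X admits a g-pure monomorphism into a g-pure-injective O_X-module, which can be chosen to be a product of skyscraper sheaves of pure-injective modules over the stalk rings. -/

import Mathlib

open TopologicalSpace CategoryTheory

universe u

namespace SheafPurity

/-! ## Purity for modules over a ring (via finite systems of linear equations) -/

/-- A linear map is a pure monomorphism if it is injective and every finite system of
linear equations with constants in `A` that is solvable in `B` is solvable in `A`. -/
def IsPureMono {R : Type u} [Ring R] {A B : Type u} [AddCommGroup A] [Module R A]
    [AddCommGroup B] [Module R B] (f : A →ₗ[R] B) : Prop :=
  Function.Injective f ∧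
    ∀ (m n : ℕ) (G : Matrix (Fin m) (Fin n) R) (a : Fin m → A) (b : Fin n → B),
      (∀ i, (∑ j, G i j • b j) = f (a i)) →
      ∃ a' : Fin n → A, ∀ i, (∑ j, G i j • a' j) = a i

/-- A module is pure-injective if every morphism to it extends along pure monomorphisms. -/
def PureInjectiveModule (R : Type u) [Ring R] (M : Type u) [AddCommGroup M]
    [Module R M] : Prop :=
  ∀ (A B : Type u) [AddCommGroup A] [Module R A] [AddCommGroup B] [Module R B]
    (f : A →ₗ[R] B), IsPureMono f → ∀ g : A →ₗ[R] M, ∃ h : B →ₗ[R] M, h.comp f = g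

/-! ## Sheaves of rings and sheaves of modules on a topological space -/

variable (X : Type u) [TopologicalSpace X]

/-- The sheaf condition for a family of sections with restriction maps: compatible
families of sections over a cover glue uniquely. -/
def IsSheafFamily (F : Opens X → Type u)
    (res : ∀ (U V : Opens X), V ≤ U → F U → F V) : Prop :=
  ∀ (ι : Type u) (U : Opens X) (V : ι → Opens X) (hU : U = iSup V) (s : ∀ i, F (V i)),
    (∀ (i j : ι) (W : Opens X) (hWi : W ≤ V i) (hWj : W ≤ V j),
      res (V i) W hWi (s i) = res (V j) W hWj (s j)) →
    ∃! t : F U, ∀ i, res U (V i) ((le_iSup V i).trans hU.ge) t = s i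

/-- A sheaf of commutative rings on `X`; `X` together with such a sheaf is a ringed space. -/
structure RingSheaf where
  obj : Opens X → Type u
  ring : ∀ U, CommRing (obj U)
  res : ∀ {U V : Opens X}, V ≤ U → obj U →+* obj V
  res_id : ∀ {U : Opens X} (s : obj U), res le_rfl s = s
  res_res : ∀ {U V W : Opens X} (h1 : W ≤ V) (h2 : V ≤ U) (s : obj U),
    res h1 (res h2 s) = res (h1.trans h2) s
  sheaf : IsSheafFamily X obj fun _ _ h s => res h s

attribute [instance] RingSheaf.ring

variable {X}

/-- A sheaf of `O`-modules on the ringed space `(X, O)`. -/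
structure OMod (O : RingSheaf X) where
  obj : Opens X → Type u
  acg : ∀ U, AddCommGroup (obj U)
  mod : ∀ U, Module (O.obj U) (obj U)
  res : ∀ {U V : Opens X}, V ≤ U → obj U →+ obj V
  res_id : ∀ {U : Opens X} (s : obj U), res le_rfl s = s
  res_res : ∀ {U V W : Opens X} (h1 : W ≤ V) (h2 : V ≤ U) (s : obj U),
    res h1 (res h2 s) = res (h1.trans h2) s
  res_smul : ∀ {U V : Opens X} (h : V ≤ U) (r : O.obj U) (m : obj U),
    res h (r • m) = O.res h r • res h m
  sheaf : IsSheafFamily X obj fun _ _ h s => res h s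

attribute [instance] OMod.acg OMod.mod

variable {O : RingSheaf X}

/-- Morphisms of sheaves of `O`-modules. -/
@[ext]
structure Hom (M N : OMod O) where
  app : ∀ U, M.obj U →ₗ[O.obj U] N.obj U
  naturality : ∀ {U V : Opens X} (h : V ≤ U) (m : M.obj U),
    N.res h (app U m) = app V (M.res h m)

instance : Category (OMod O) where
  Hom M N := Hom M N
  id M := ⟨fun _ => LinearMap.id, fun _ _ => rfl⟩
  comp f g := ⟨fun U => (g.app U).comp (f.app U), fun h m => by
    simp only [LinearMap.comp_apply]
    rw [g.naturality, f.naturality]⟩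
  id_comp f := by apply Hom.ext; rfl
  comp_id f := by apply Hom.ext; rfl
  assoc f g h := by apply Hom.ext; rfl

lemma hom_app {M N : OMod O} (f : M ⟶ N) (U : Opens X) : (f : Hom M N).app U = f.app U := rfl

@[simp] lemma comp_app {M N P : OMod O} (f : M ⟶ N) (g : N ⟶ P) (U : Opens X) (m : M.obj U) :
    (f ≫ g).app U m = g.app U (f.app U m) := rfl

@[simp] lemma id_app (M : OMod O) (U : Opens X) (m : M.obj U) :
    (Hom.app (𝟙 M) U) m = m := rfl

end SheafPurity

namespace SheafPurity

variable {X : Type u} [TopologicalSpace X] {O : RingSheaf X}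

/-! ## Stalks -/

/-- An open neighbourhood of `x`. -/
structure Nbhd (x : X) where
  U : Opens X
  mem : x ∈ U

instance (x : X) : Inhabited (Nbhd x) := ⟨⟨⊤, trivial⟩⟩

/-- Intersection of neighbourhoods. -/
def Nbhd.inf {x : X} (N₁ N₂ : Nbhd x) : Nbhd x := ⟨N₁.U ⊓ N₂.U, ⟨N₁.mem, N₂.mem⟩⟩

lemma Nbhd.inf_le_left {x : X} (N₁ N₂ : Nbhd x) : (N₁.inf N₂).U ≤ N₁.U := _root_.inf_le_left
lemma Nbhd.inf_le_right {x : X} (N₁ N₂ : Nbhd x) : (N₁.inf N₂).U ≤ N₂.U := _root_.inf_le_right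

/-- The germ relation. -/
def germRel (M : OMod O) (x : X) :
    (Σ N : Nbhd x, M.obj N.U) → (Σ N : Nbhd x, M.obj N.U) → Prop :=
  fun a b => ∃ (N : Nbhd x) (h₁ : N.U ≤ a.1.U) (h₂ : N.U ≤ b.1.U),
    M.res h₁ a.2 = M.res h₂ b.2

/-- The stalk of a sheaf of modules at a point. -/
def Stalk (M : OMod O) (x : X) : Type u := Quot (germRel M x)

/-- The germ of a section. -/
def germ {M : OMod O} {x : X} (N : Nbhd x) (s : M.obj N.U) : Stalk M x :=
  Quot.mk _ ⟨N, s⟩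

lemma germ_eq {M : OMod O} {x : X} {N₁ N₂ : Nbhd x} {s₁ : M.obj N₁.U} {s₂ : M.obj N₂.U}
    (N : Nbhd x) (h₁ : N.U ≤ N₁.U) (h₂ : N.U ≤ N₂.U)
    (h : M.res h₁ s₁ = M.res h₂ s₂) : germ N₁ s₁ = germ N₂ s₂ :=
  Quot.sound ⟨N, h₁, h₂, h⟩

lemma germ_res {M : OMod O} {x : X} {N₁ N₂ : Nbhd x} (h : N₂.U ≤ N₁.U) (s : M.obj N₁.U) :
    germ N₂ (M.res h s) = germ N₁ s :=
  germ_eq N₂ le_rfl h (by rw [M.res_id])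

lemma germ_surj {M : OMod O} {x : X} (t : Stalk M x) : ∃ (N : Nbhd x) (s : M.obj N.U), t = germ N s := by
  induction t using Quot.ind with
  | _ a => exact ⟨a.1, a.2, rfl⟩

/-- Lift a binary germ-compatible operation to stalks. -/
def lift₂ {M₁ M₂ : OMod O} {x : X} {γ : Sort*}
    (f : ∀ (N₁ : Nbhd x), M₁.obj N₁.U → ∀ (N₂ : Nbhd x), M₂.obj N₂.U → γ)
    (hl : ∀ N₁ s₁ N₁' s₁' N₂ s₂, germRel M₁ x ⟨N₁, s₁⟩ ⟨N₁', s₁'⟩ →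
      f N₁ s₁ N₂ s₂ = f N₁' s₁' N₂ s₂)
    (hr : ∀ N₁ s₁ N₂ s₂ N₂' s₂', germRel M₂ x ⟨N₂, s₂⟩ ⟨N₂', s₂'⟩ →
      f N₁ s₁ N₂ s₂ = f N₁ s₁ N₂' s₂') :
    Stalk M₁ x → Stalk M₂ x → γ :=
  Quot.lift
    (fun a => Quot.lift (fun b => f a.1 a.2 b.1 b.2)
      (fun b b' hb => hr a.1 a.2 b.1 b.2 b'.1 b'.2 hb))
    (fun a a' ha => funext fun t => by
      induction t using Quot.ind with
      | _ b => exact hl a.1 a.2 a'.1 a'.2 b.1 b.2 ha)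

@[simp] lemma lift₂_germ {M₁ M₂ : OMod O} {x : X} {γ : Sort*}
    (f : ∀ (N₁ : Nbhd x), M₁.obj N₁.U → ∀ (N₂ : Nbhd x), M₂.obj N₂.U → γ) (hl hr)
    (N₁ : Nbhd x) (s₁ : M₁.obj N₁.U) (N₂ : Nbhd x) (s₂ : M₂.obj N₂.U) :
    lift₂ (γ := γ) f hl hr (germ N₁ s₁) (germ N₂ s₂) = f N₁ s₁ N₂ s₂ := rfl

end SheafPurity

namespace SheafPurity

variable {X : Type u} [TopologicalSpace X] {O : RingSheaf X}

protected def Stalk.add {M : OMod O} {x : X} : Stalk M x → Stalk M x → Stalk M x :=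
  lift₂ (fun N₁ s₁ N₂ s₂ => germ (N₁.inf N₂)
      (M.res (N₁.inf_le_left N₂) s₁ + M.res (N₁.inf_le_right N₂) s₂))
    (by
      rintro N₁ s₁ N₁' s₁' N₂ s₂ ⟨W, h₁, h₂, he⟩
      refine germ_eq (W.inf N₂) (show (W.inf N₂).U ≤ (N₁.inf N₂).U from inf_le_inf_right _ h₁)
        (show (W.inf N₂).U ≤ (N₁'.inf N₂).U from inf_le_inf_right _ h₂) ?_
      simp only [map_add, M.res_res]
      congr 1
      rw [← M.res_res (W.inf_le_left N₂) h₁, he, M.res_res])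
    (by
      rintro N₁ s₁ N₂ s₂ N₂' s₂' ⟨W, h₁, h₂, he⟩
      refine germ_eq (N₁.inf W) (show (N₁.inf W).U ≤ (N₁.inf N₂).U from inf_le_inf_left _ h₁)
        (show (N₁.inf W).U ≤ (N₁.inf N₂').U from inf_le_inf_left _ h₂) ?_
      simp only [map_add, M.res_res]
      congr 1
      rw [← M.res_res (N₁.inf_le_right W) h₁, he, M.res_res])

protected def Stalk.neg {M : OMod O} {x : X} : Stalk M x → Stalk M x :=
  Quot.lift (fun a => germ a.1 (-a.2)) (by
    rintro a b ⟨W, h₁, h₂, he⟩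
    exact germ_eq W h₁ h₂ (by simp only [map_neg, he]))

@[simp] lemma add_germ {M : OMod O} {x : X} (N₁ N₂ : Nbhd x) (s₁ : M.obj N₁.U)
    (s₂ : M.obj N₂.U) : Stalk.add (germ N₁ s₁) (germ N₂ s₂) =
      germ (N₁.inf N₂) (M.res (N₁.inf_le_left N₂) s₁ + M.res (N₁.inf_le_right N₂) s₂) := rfl

@[simp] lemma neg_germ {M : OMod O} {x : X} (N : Nbhd x) (s : M.obj N.U) :
    Stalk.neg (germ N s) = germ N (-s) := rfl


section AddGroup
variable {M : OMod O} {x : X}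

set_option maxHeartbeats 1000000 in
lemma stalk_add_assoc (a b c : Stalk M x) :
    Stalk.add (Stalk.add a b) c = Stalk.add a (Stalk.add b c) := by
  obtain ⟨N₁, s₁, rfl⟩ := germ_surj a
  obtain ⟨N₂, s₂, rfl⟩ := germ_surj b
  obtain ⟨N₃, s₃, rfl⟩ := germ_surj c
  simp only [add_germ]
  refine germ_eq ((N₁.inf N₂).inf N₃) le_rfl (le_of_eq (inf_assoc _ _ _)) ?_
  simp only [map_add, M.res_res, add_assoc]

lemma stalk_zero_add (a : Stalk M x) :
    Stalk.add (germ (default : Nbhd x) 0) a = a := by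
  obtain ⟨N, s, rfl⟩ := germ_surj a
  simp only [add_germ]
  refine germ_eq ((default : Nbhd x).inf N) le_rfl (Nbhd.inf_le_right _ _) ?_
  simp only [map_add, map_zero, M.res_res, zero_add]

lemma stalk_add_zero (a : Stalk M x) :
    Stalk.add a (germ (default : Nbhd x) 0) = a := by
  obtain ⟨N, s, rfl⟩ := germ_surj a
  simp only [add_germ]
  refine germ_eq (N.inf (default : Nbhd x)) le_rfl (Nbhd.inf_le_left _ _) ?_
  simp only [map_add, map_zero, M.res_res, add_zero]

lemma stalk_add_comm (a b : Stalk M x) : Stalk.add a b = Stalk.add b a := by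
  obtain ⟨N₁, s₁, rfl⟩ := germ_surj a
  obtain ⟨N₂, s₂, rfl⟩ := germ_surj b
  simp only [add_germ]
  refine germ_eq (N₁.inf N₂) le_rfl (le_of_eq (inf_comm _ _)) ?_
  simp only [map_add, M.res_res, add_comm]

lemma stalk_neg_add_cancel (a : Stalk M x) :
    Stalk.add (Stalk.neg a) a = germ (default : Nbhd x) 0 := by
  obtain ⟨N, s, rfl⟩ := germ_surj a
  simp only [neg_germ, add_germ]
  refine germ_eq (N.inf N) le_rfl le_top ?_
  simp only [map_add, map_neg, map_zero, neg_add_cancel]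

instance : Add (Stalk M x) := ⟨Stalk.add⟩
instance : Neg (Stalk M x) := ⟨Stalk.neg⟩
instance : Zero (Stalk M x) := ⟨germ (default : Nbhd x) 0⟩

instance : AddCommGroup (Stalk M x) where
  add := (· + ·)
  neg := Neg.neg
  zero := 0
  add_assoc := stalk_add_assoc
  zero_add := stalk_zero_add
  add_zero := stalk_add_zero
  add_comm := stalk_add_comm
  neg_add_cancel := stalk_neg_add_cancel
  nsmul := nsmulRec
  nsmul_zero := fun _ => rfl
  nsmul_succ := fun _ _ => rfl
  zsmul := zsmulRec
  zsmul_zero' := fun _ => rfl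
  zsmul_succ' := fun _ _ => rfl
  zsmul_neg' := fun _ _ => rfl

end AddGroup

@[simp] lemma germ_add {M : OMod O} {x : X} (N : Nbhd x) (s t : M.obj N.U) :
    (germ N (s + t) : Stalk M x) = germ N s + germ N t := by
  show _ = Stalk.add _ _
  simp only [add_germ]
  exact germ_eq (N.inf N) (Nbhd.inf_le_left _ _) le_rfl (by simp [map_add, M.res_res])

@[simp] lemma germ_zero {M : OMod O} {x : X} (N : Nbhd x) :
    (germ N (0 : M.obj N.U) : Stalk M x) = 0 := by
  show _ = germ (default : Nbhd x) 0
  exact germ_eq N le_rfl le_top (by simp)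

end SheafPurity

namespace SheafPurity

variable {X : Type u} [TopologicalSpace X] {O : RingSheaf X}

section MoreStalk
variable {M : OMod O} {x : X}

@[simp] lemma add_germ' (N₁ N₂ : Nbhd x) (s₁ : M.obj N₁.U) (s₂ : M.obj N₂.U) :
    germ N₁ s₁ + germ N₂ s₂ =
      germ (N₁.inf N₂) (M.res (N₁.inf_le_left N₂) s₁ + M.res (N₁.inf_le_right N₂) s₂) := rfl

@[simp] lemma neg_germ' (N : Nbhd x) (s : M.obj N.U) :
    -(germ N s) = germ N (-s) := rfl

lemma zero_def : (0 : Stalk M x) = germ (default : Nbhd x) 0 := rfl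

end MoreStalk

/-- A sheaf of rings, regarded as a sheaf of modules over itself. -/
@[reducible] def RingSheaf.toOMod (O : RingSheaf X) : OMod O where
  obj := O.obj
  acg U := inferInstance
  mod U := inferInstance
  res h := (O.res h).toAddMonoidHom
  res_id := O.res_id
  res_res := O.res_res
  res_smul h r m := by simpa [smul_eq_mul] using map_mul (O.res h) r m
  sheaf := O.sheaf

/-- The stalk of the structure sheaf at a point. -/
abbrev RStalk (O : RingSheaf X) (x : X) : Type u := Stalk O.toOMod x

section RingStalk

variable {x : X}

@[simp] lemma rh_apply {α β : Type u} [NonAssocSemiring α] [NonAssocSemiring β]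
    (f : α →+* β) (a : α) : f.toAddMonoidHom a = f a := rfl

@[simp] lemma toOMod_res {U V : Opens X} (h : V ≤ U) (s : O.obj U) :
    O.toOMod.res h s = O.res h s := rfl

protected def RStalk.mul : RStalk O x → RStalk O x → RStalk O x :=
  lift₂ (fun N₁ s₁ N₂ s₂ => germ (N₁.inf N₂)
      (O.res (N₁.inf_le_left N₂) s₁ * O.res (N₁.inf_le_right N₂) s₂))
    (by
      rintro N₁ s₁ N₁' s₁' N₂ s₂ ⟨W, h₁, h₂, he⟩
      refine germ_eq (W.inf N₂) (show (W.inf N₂).U ≤ (N₁.inf N₂).U from inf_le_inf_right _ h₁)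
        (show (W.inf N₂).U ≤ (N₁'.inf N₂).U from inf_le_inf_right _ h₂) ?_
      have he' : O.res h₁ s₁ = O.res h₂ s₁' := he
      show O.res _ _ = O.res _ _
      simp only [map_mul, O.res_res]
      congr 1
      rw [← O.res_res (W.inf_le_left N₂) h₁, he', O.res_res])
    (by
      rintro N₁ s₁ N₂ s₂ N₂' s₂' ⟨W, h₁, h₂, he⟩
      refine germ_eq (N₁.inf W) (show (N₁.inf W).U ≤ (N₁.inf N₂).U from inf_le_inf_left _ h₁)
        (show (N₁.inf W).U ≤ (N₁.inf N₂').U from inf_le_inf_left _ h₂) ?_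
      have he' : O.res h₁ s₂ = O.res h₂ s₂' := he
      show O.res _ _ = O.res _ _
      simp only [map_mul, O.res_res]
      congr 1
      rw [← O.res_res (N₁.inf_le_right W) h₁, he', O.res_res])

instance : Mul (RStalk O x) := ⟨RStalk.mul⟩
instance : One (RStalk O x) := ⟨germ (M := O.toOMod) (default : Nbhd x) 1⟩

@[simp] lemma mul_germ (N₁ N₂ : Nbhd x) (s₁ : O.obj N₁.U) (s₂ : O.obj N₂.U) :
    (germ (M := O.toOMod) N₁ s₁) * (germ (M := O.toOMod) N₂ s₂) =
      germ (N₁.inf N₂) (O.res (N₁.inf_le_left N₂) s₁ * O.res (N₁.inf_le_right N₂) s₂) := rfl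

lemma one_def : (1 : RStalk O x) = germ (M := O.toOMod) (default : Nbhd x) 1 := rfl


section RingAx
variable {x : X}

lemma r_mul_assoc (a b c : RStalk O x) : a * b * c = a * (b * c) := by
  obtain ⟨N₁, s₁, rfl⟩ := germ_surj a
  obtain ⟨N₂, s₂, rfl⟩ := germ_surj b
  obtain ⟨N₃, s₃, rfl⟩ := germ_surj c
  simp only [mul_germ]
  refine germ_eq ((N₁.inf N₂).inf N₃) le_rfl (le_of_eq (inf_assoc _ _ _)) ?_
  simp only [rh_apply, map_mul, O.res_res, mul_assoc]

lemma r_one_mul (a : RStalk O x) : 1 * a = a := by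
  obtain ⟨N, s, rfl⟩ := germ_surj a
  rw [one_def]
  simp only [mul_germ]
  refine germ_eq ((default : Nbhd x).inf N) le_rfl (Nbhd.inf_le_right _ _) ?_
  simp only [rh_apply, map_mul, map_one, O.res_res, one_mul]

lemma r_mul_comm (a b : RStalk O x) : a * b = b * a := by
  obtain ⟨N₁, s₁, rfl⟩ := germ_surj a
  obtain ⟨N₂, s₂, rfl⟩ := germ_surj b
  simp only [mul_germ]
  refine germ_eq (N₁.inf N₂) le_rfl (le_of_eq (inf_comm _ _)) ?_
  simp only [rh_apply, map_mul, O.res_res, mul_comm]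

lemma r_mul_one (a : RStalk O x) : a * 1 = a := by
  rw [r_mul_comm, r_one_mul]

lemma r_left_distrib (a b c : RStalk O x) : a * (b + c) = a * b + a * c := by
  obtain ⟨N₁, s₁, rfl⟩ := germ_surj a
  obtain ⟨N₂, s₂, rfl⟩ := germ_surj b
  obtain ⟨N₃, s₃, rfl⟩ := germ_surj c
  simp only [add_germ' (M := O.toOMod), mul_germ]
  refine germ_eq (N₁.inf (N₂.inf N₃)) le_rfl
    (by exact (le_inf (inf_le_inf_left _ (Nbhd.inf_le_left _ _))
      (inf_le_inf_left _ (Nbhd.inf_le_right _ _)))) ?_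
  simp only [rh_apply, map_mul, map_add, O.res_res, mul_add]
  repeat erw [O.res_res]

lemma r_right_distrib (a b c : RStalk O x) : (a + b) * c = a * c + b * c := by
  rw [r_mul_comm, r_left_distrib, r_mul_comm c a, r_mul_comm c b]

lemma r_zero_mul (a : RStalk O x) : 0 * a = 0 := by
  obtain ⟨N, s, rfl⟩ := germ_surj a
  rw [zero_def]
  simp only [mul_germ]
  refine germ_eq ((default : Nbhd x).inf N) le_rfl le_top ?_
  simp only [rh_apply, map_mul, map_zero, zero_mul]

lemma r_mul_zero (a : RStalk O x) : a * 0 = 0 := by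
  rw [r_mul_comm, r_zero_mul]

instance : CommRing (RStalk O x) where
  __ := (inferInstance : AddCommGroup (Stalk (O.toOMod) x))
  mul := (· * ·)
  one := 1
  mul_assoc := r_mul_assoc
  one_mul := r_one_mul
  mul_one := r_mul_one
  mul_comm := r_mul_comm
  left_distrib := r_left_distrib
  right_distrib := r_right_distrib
  zero_mul := r_zero_mul
  mul_zero := r_mul_zero

end RingAx

/-- The germ map for the structure sheaf, as a ring homomorphism. -/
def RingSheaf.germHom (O : RingSheaf X) {x : X} (N : Nbhd x) : O.obj N.U →+* RStalk O x where
  toFun s := germ (M := O.toOMod) N s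
  map_one' := by
    rw [one_def]
    exact germ_eq N le_rfl le_top (by simp only [rh_apply, map_one])
  map_mul' r s := by
    show germ (M := O.toOMod) N (r * s) = germ (M := O.toOMod) N r * germ (M := O.toOMod) N s
    rw [mul_germ]
    exact germ_eq (N.inf N) (Nbhd.inf_le_left _ _) le_rfl
      (by simp only [rh_apply, map_mul, O.res_res])
  map_zero' := by
    show germ (M := O.toOMod) N 0 = 0
    exact germ_zero (M := O.toOMod) N
  map_add' r s := by
    show germ (M := O.toOMod) N (r + s) = germ (M := O.toOMod) N r + germ (M := O.toOMod) N s
    exact germ_add (M := O.toOMod) N r s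

@[simp] lemma germHom_apply {x : X} (N : Nbhd x) (s : O.obj N.U) :
    O.germHom N s = germ (M := O.toOMod) N s := rfl

lemma germ_res_ring {x : X} {N₁ N₂ : Nbhd x} (h : N₂.U ≤ N₁.U) (s : O.obj N₁.U) :
    germ (M := O.toOMod) N₂ (O.res h s) = germ (M := O.toOMod) N₁ s :=
  germ_res (M := O.toOMod) h s

end RingStalk

end SheafPurity

namespace SheafPurity

variable {X : Type u} [TopologicalSpace X] {O : RingSheaf X}

section ModuleStalk

variable {M : OMod O} {x : X}

protected def Stalk.smul : RStalk O x → Stalk M x → Stalk M x :=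
  lift₂ (fun N₁ r N₂ s => germ (N₁.inf N₂)
      (O.res (N₁.inf_le_left N₂) r • M.res (N₁.inf_le_right N₂) s))
    (by
      rintro N₁ r N₁' r' N₂ s ⟨W, h₁, h₂, he⟩
      refine germ_eq (W.inf N₂) (show (W.inf N₂).U ≤ (N₁.inf N₂).U from inf_le_inf_right _ h₁)
        (show (W.inf N₂).U ≤ (N₁'.inf N₂).U from inf_le_inf_right _ h₂) ?_
      have he' : O.res h₁ r = O.res h₂ r' := he
      simp only [map_add, M.res_smul, M.res_res, O.res_res]
      congr 1
      rw [← O.res_res (W.inf_le_left N₂) h₁, he', O.res_res])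
    (by
      rintro N₁ r N₂ s N₂' s' ⟨W, h₁, h₂, he⟩
      refine germ_eq (N₁.inf W) (show (N₁.inf W).U ≤ (N₁.inf N₂).U from inf_le_inf_left _ h₁)
        (show (N₁.inf W).U ≤ (N₁.inf N₂').U from inf_le_inf_left _ h₂) ?_
      simp only [M.res_smul, M.res_res, O.res_res]
      congr 1
      rw [← M.res_res (N₁.inf_le_right W) h₁, he, M.res_res])

instance : SMul (RStalk O x) (Stalk M x) := ⟨Stalk.smul⟩

@[simp] lemma smul_germ (N₁ N₂ : Nbhd x) (r : O.obj N₁.U) (s : M.obj N₂.U) :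
    (germ (M := O.toOMod) N₁ r) • (germ N₂ s) =
      germ (N₁.inf N₂) (O.res (N₁.inf_le_left N₂) r • M.res (N₁.inf_le_right N₂) s) := rfl

lemma st_one_smul (a : Stalk M x) : (1 : RStalk O x) • a = a := by
  obtain ⟨N, s, rfl⟩ := germ_surj a
  rw [one_def]
  simp only [smul_germ]
  refine germ_eq ((default : Nbhd x).inf N) le_rfl (Nbhd.inf_le_right _ _) ?_
  simp only [M.res_smul, M.res_res, map_one, one_smul]

lemma st_mul_smul (r t : RStalk O x) (a : Stalk M x) : (r * t) • a = r • t • a := by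
  obtain ⟨N₁, r, rfl⟩ := germ_surj r
  obtain ⟨N₂, t, rfl⟩ := germ_surj t
  obtain ⟨N₃, s, rfl⟩ := germ_surj a
  simp only [mul_germ, smul_germ]
  refine germ_eq ((N₁.inf N₂).inf N₃) le_rfl (le_of_eq (inf_assoc _ _ _)) ?_
  simp only [rh_apply, M.res_smul, M.res_res, O.res_res, map_mul, mul_smul]

lemma st_smul_add (r : RStalk O x) (a b : Stalk M x) : r • (a + b) = r • a + r • b := by
  obtain ⟨N₁, rr, rfl⟩ := germ_surj r
  obtain ⟨N₂, s, rfl⟩ := germ_surj a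
  obtain ⟨N₃, t, rfl⟩ := germ_surj b
  simp only [add_germ', smul_germ]
  refine germ_eq (N₁.inf (N₂.inf N₃)) le_rfl
    (by exact (le_inf (inf_le_inf_left _ (Nbhd.inf_le_left _ _))
      (inf_le_inf_left _ (Nbhd.inf_le_right _ _)))) ?_
  simp only [rh_apply, M.res_smul, M.res_res, O.res_res, map_add, smul_add]
  repeat erw [M.res_smul, M.res_res, O.res_res]

lemma st_smul_zero (r : RStalk O x) : r • (0 : Stalk M x) = 0 := by
  obtain ⟨N, rr, rfl⟩ := germ_surj r
  rw [zero_def]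
  simp only [smul_germ]
  refine germ_eq (N.inf (default : Nbhd x)) le_rfl le_top ?_
  simp only [map_zero, smul_zero]

lemma st_add_smul (r t : RStalk O x) (a : Stalk M x) : (r + t) • a = r • a + t • a := by
  obtain ⟨N₁, rr, rfl⟩ := germ_surj r
  obtain ⟨N₂, tt, rfl⟩ := germ_surj t
  obtain ⟨N₃, s, rfl⟩ := germ_surj a
  simp only [add_germ', smul_germ]
  refine germ_eq ((N₁.inf N₂).inf N₃) le_rfl
    (by exact (le_inf (inf_le_inf_right _ (Nbhd.inf_le_left _ _))
      (inf_le_inf_right _ (Nbhd.inf_le_right _ _)))) ?_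
  simp only [rh_apply, M.res_smul, M.res_res, O.res_res, map_add, add_smul]
  repeat erw [M.res_smul, M.res_res, O.res_res]

lemma st_zero_smul (a : Stalk M x) : (0 : RStalk O x) • a = 0 := by
  obtain ⟨N, s, rfl⟩ := germ_surj a
  rw [zero_def]
  simp only [smul_germ]
  refine germ_eq ((default : Nbhd x).inf N) le_rfl le_top ?_
  simp only [rh_apply, map_zero, zero_smul]

instance : Module (RStalk O x) (Stalk M x) where
  smul := (· • ·)
  one_smul := st_one_smul
  mul_smul := st_mul_smul
  smul_add := st_smul_add
  smul_zero := st_smul_zero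
  add_smul := st_add_smul
  zero_smul := st_zero_smul

lemma germ_smul (N : Nbhd x) (r : O.obj N.U) (s : M.obj N.U) :
    (germ N (r • s) : Stalk M x) = O.germHom N r • germ N s := by
  rw [germHom_apply]
  simp only [smul_germ]
  exact germ_eq (N.inf N) (Nbhd.inf_le_left _ _) le_rfl
    (by simp only [M.res_smul, M.res_res, O.res_res, rh_apply])

end ModuleStalk

/-- The underlying function of the map induced on stalks by a morphism. -/
def stalkMapFun {M N : OMod O} (f : Hom M N) (x : X) : Stalk M x → Stalk N x :=
  Quot.lift (fun a => germ a.1 (f.app _ a.2)) (by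
    rintro a b ⟨W, h₁, h₂, he⟩
    refine germ_eq W h₁ h₂ ?_
    rw [f.naturality, f.naturality, he])

@[simp] lemma stalkMapFun_germ {M N : OMod O} (f : Hom M N) (x : X)
    (Nb : Nbhd x) (s : M.obj Nb.U) :
    stalkMapFun f x (germ Nb s) = germ Nb (f.app Nb.U s) := rfl

/-- The map induced on stalks by a morphism of sheaves of modules, as a linear map
over the stalk of the structure sheaf. -/
def stalkMap {M N : OMod O} (f : M ⟶ N) (x : X) : Stalk M x →ₗ[RStalk O x] Stalk N x where
  toFun := stalkMapFun f x
  map_add' a b := by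
    obtain ⟨N₁, s₁, rfl⟩ := germ_surj a
    obtain ⟨N₂, s₂, rfl⟩ := germ_surj b
    simp only [add_germ', stalkMapFun_germ]
    refine germ_eq (N₁.inf N₂) le_rfl le_rfl ?_
    simp only [map_add, N.res_res, M.res_res, Hom.naturality]
  map_smul' r a := by
    obtain ⟨N₁, rr, rfl⟩ := germ_surj r
    obtain ⟨N₂, s, rfl⟩ := germ_surj a
    simp only [smul_germ, stalkMapFun_germ, RingHom.id_apply]
    refine germ_eq (N₁.inf N₂) le_rfl le_rfl ?_
    simp only [map_smul, N.res_smul, M.res_res, N.res_res, O.res_res, Hom.naturality]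

@[simp] lemma stalkMap_germ {M N : OMod O} (f : M ⟶ N) (x : X) (Nb : Nbhd x) (s : M.obj Nb.U) :
    stalkMap f x (germ Nb s) = germ Nb ((f : Hom M N).app Nb.U s) := rfl

/-! ## Geometric purity -/

/-- A morphism of sheaves of modules is a geometrically pure monomorphism if it is a
monomorphism (i.e. injective on sections) and the induced map on every stalk is a pure
monomorphism of modules over the stalk ring. -/
def IsGPureMono {M N : OMod O} (f : M ⟶ N) : Prop :=
  (∀ U, Function.Injective ((f : Hom M N).app U)) ∧
    ∀ x : X, IsPureMono (stalkMap f x)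

/-- A sheaf of modules is geometrically pure-injective if every morphism to it extends
along every geometrically pure monomorphism. -/
def GPureInjective (P : OMod O) : Prop :=
  ∀ (M N : OMod O) (f : M ⟶ N), IsGPureMono f →
    ∀ φ : M ⟶ P, ∃ ψ : N ⟶ P, f ≫ ψ = φ

end SheafPurity

namespace SheafPurity

variable {X : Type u} [TopologicalSpace X] {O : RingSheaf X}

/-! ## Skyscraper sheaves -/

section Sky

variable (x : X) (A : Type u) [AddCommGroup A] [Module (RStalk O x) A]

/-- The module structure on the sections of the skyscraper sheaf. -/
def skyModule (U : Opens X) : Module (O.obj U) (PLift (x ∈ U) → A) where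
  smul r f := fun h => (O.germHom ⟨U, h.down⟩ r) • f h
  one_smul f := funext fun h => by
    show O.germHom ⟨U, h.down⟩ 1 • f h = f h
    simp
  mul_smul r t f := funext fun h => by
    show O.germHom ⟨U, h.down⟩ (r * t) • f h =
      O.germHom ⟨U, h.down⟩ r • O.germHom ⟨U, h.down⟩ t • f h
    rw [map_mul, mul_smul]
  smul_zero r := funext fun h => by
    show O.germHom ⟨U, h.down⟩ r • (0 : A) = 0
    simp
  smul_add r f g := funext fun h => by
    show O.germHom ⟨U, h.down⟩ r • (f h + g h) =
      O.germHom ⟨U, h.down⟩ r • f h + O.germHom ⟨U, h.down⟩ r • g h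
    rw [smul_add]
  add_smul r t f := funext fun h => by
    show O.germHom ⟨U, h.down⟩ (r + t) • f h =
      O.germHom ⟨U, h.down⟩ r • f h + O.germHom ⟨U, h.down⟩ t • f h
    rw [map_add, add_smul]
  zero_smul f := funext fun h => by
    show O.germHom ⟨U, h.down⟩ 0 • f h = 0
    simp

/-- The skyscraper sheaf at `x` with value the `RStalk O x`-module `A`. -/
def sky : OMod O where
  obj U := PLift (x ∈ U) → A
  acg U := inferInstance
  mod U := skyModule x A U
  res {U V} h :=
    { toFun := fun f hv => f ⟨h hv.down⟩
      map_zero' := rfl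
      map_add' := fun _ _ => rfl }
  res_id _ := rfl
  res_res _ _ _ := rfl
  res_smul {U V} h r f := by
    funext hv
    show O.germHom ⟨U, h hv.down⟩ r • f ⟨h hv.down⟩ =
      O.germHom ⟨V, hv.down⟩ (O.res h r) • f ⟨h hv.down⟩
    rw [show O.germHom (x := x) ⟨V, hv.down⟩ (O.res h r) = O.germHom ⟨U, h hv.down⟩ r from
      germ_res_ring (N₁ := ⟨U, h hv.down⟩) (N₂ := ⟨V, hv.down⟩) h r]
  sheaf := by
    intro ι U V hU s compat
    have mem : ∀ (h : x ∈ U), ∃ i, x ∈ V i := fun h => Opens.mem_iSup.mp (hU ▸ h)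
    refine ⟨fun h => s (mem h.down).choose ⟨(mem h.down).choose_spec⟩,
      fun i => funext fun hv => ?_, ?_⟩
    · have hU' : x ∈ U := ((le_iSup V i).trans hU.ge) hv.down
      exact congrFun (compat (mem hU').choose i (V (mem hU').choose ⊓ V i)
        inf_le_left inf_le_right) ⟨⟨(mem hU').choose_spec, hv.down⟩⟩
    · intro y hy
      funext h
      obtain ⟨i, hi⟩ := mem h.down
      have h1 : y h = s i ⟨hi⟩ := congrFun (hy i) ⟨hi⟩
      have h2 : s (mem h.down).choose ⟨(mem h.down).choose_spec⟩ = s i ⟨hi⟩ :=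
        congrFun (compat _ i (V (mem h.down).choose ⊓ V i) inf_le_left inf_le_right)
          ⟨⟨(mem h.down).choose_spec, hi⟩⟩
      rw [h1, h2]

end Sky

/-- Functoriality of the skyscraper sheaf. -/
def skyMap {x : X} {A B : Type u} [AddCommGroup A] [Module (RStalk O x) A]
    [AddCommGroup B] [Module (RStalk O x) B] (φ : A →ₗ[RStalk O x] B) :
    (sky x A : OMod O) ⟶ (sky x B : OMod O) where
  app U :=
    { toFun := fun f h => φ (f h)
      map_add' := fun f g => funext fun h => by
        show φ (f h + g h) = φ (f h) + φ (g h)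
        rw [map_add]
      map_smul' := fun r f => funext fun h => by
        show φ (O.germHom ⟨U, h.down⟩ r • f h) = O.germHom ⟨U, h.down⟩ r • φ (f h)
        rw [map_smul] }
  naturality _ _ := rfl

/-- The skyscraper sheaf functor. -/
def skyFunctor (O : RingSheaf X) (x : X) : ModuleCat.{u} (RStalk O x) ⥤ OMod O where
  obj A := sky x A
  map φ := skyMap φ.hom
  map_id A := rfl
  map_comp φ ψ := rfl

end SheafPurity

namespace SheafPurity

variable {X : Type u} [TopologicalSpace X] {O : RingSheaf X}

/-! ## Direct image along the inclusion of an open subset -/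

/-- The direct image `ι_{U,*}(M|_U)` of the restriction of `M` to an open set `U`:
its sections over `V` are the sections of `M` over `U ⊓ V`. -/
def pushforwardInto (U : Opens X) (M : OMod O) : OMod O where
  obj V := M.obj (U ⊓ V)
  acg V := inferInstance
  mod V := Module.compHom _ (O.res (inf_le_right : U ⊓ V ≤ V))
  res {V W} h := M.res (inf_le_inf_left U h)
  res_id s := M.res_id s
  res_res h1 h2 s := M.res_res _ _ s
  res_smul {V W} h r m := by
    show M.res (show U ⊓ W ≤ U ⊓ V from inf_le_inf_left U h) (O.res (inf_le_right : U ⊓ V ≤ V) r • m) =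
      O.res (inf_le_right : U ⊓ W ≤ W) (O.res h r) • M.res (show U ⊓ W ≤ U ⊓ V from inf_le_inf_left U h) m
    rw [M.res_smul, O.res_res, O.res_res]
  sheaf := by
    intro ι V₀ V hV s compat
    obtain ⟨t, ht, huniq⟩ := M.sheaf ι (U ⊓ V₀) (fun i => U ⊓ V i)
      (by rw [hV, inf_iSup_eq]) s
      (by
        intro i j W hWi hWj
        have hW : W ≤ U ⊓ (V i ⊓ V j) :=
          le_inf (hWi.trans inf_le_left)
            (le_inf (hWi.trans inf_le_right) (hWj.trans inf_le_right))
        calc M.res hWi (s i)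
            = M.res hW (M.res (inf_le_inf_left U inf_le_left) (s i)) := by
              rw [M.res_res]
          _ = M.res hW (M.res (inf_le_inf_left U inf_le_right) (s j)) :=
              congrArg (M.res hW) (compat i j (V i ⊓ V j) inf_le_left inf_le_right)
          _ = M.res hWj (s j) := by rw [M.res_res])
    exact ⟨t, fun i => ht i, fun y hy => huniq y fun i => hy i⟩

/-- The unit morphism `M ⟶ ι_{U,*}(M|_U)`, given by restriction of sections. -/
def pushforwardUnit (U : Opens X) (M : OMod O) : M ⟶ pushforwardInto U M where
  app V :=
    { toFun := fun m => M.res (inf_le_right : U ⊓ V ≤ V) m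
      map_add' := fun _ _ => map_add _ _ _
      map_smul' := fun r m => by
        show M.res (inf_le_right : U ⊓ V ≤ V) (r • m) = O.res (inf_le_right : U ⊓ V ≤ V) r • M.res (inf_le_right : U ⊓ V ≤ V) m
        rw [M.res_smul] }
  naturality {V W} h m := by
    show M.res _ (M.res _ m) = M.res _ (M.res _ m)
    rw [M.res_res, M.res_res]

/-! ## Binary products -/

/-- The binary product of two sheaves of modules. -/
def prod2 (M N : OMod O) : OMod O where
  obj U := M.obj U × N.obj U
  acg U := inferInstance
  mod U := inferInstance
  res {U V} h := (M.res h).prodMap (N.res h)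
  res_id s := Prod.ext (M.res_id s.1) (N.res_id s.2)
  res_res h1 h2 s := Prod.ext (M.res_res h1 h2 s.1) (N.res_res h1 h2 s.2)
  res_smul h r m := Prod.ext (M.res_smul h r m.1) (N.res_smul h r m.2)
  sheaf := by
    intro ι U V hU s compat
    obtain ⟨t₁, ht₁, hu₁⟩ := M.sheaf ι U V hU (fun i => (s i).1)
      (fun i j W hWi hWj => congrArg Prod.fst (compat i j W hWi hWj))
    obtain ⟨t₂, ht₂, hu₂⟩ := N.sheaf ι U V hU (fun i => (s i).2)
      (fun i j W hWi hWj => congrArg Prod.snd (compat i j W hWi hWj))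
    refine ⟨(t₁, t₂), fun i => ?_, fun y hy => ?_⟩
    · exact Prod.ext (ht₁ i) (ht₂ i)
    · have h₁ : y.1 = t₁ := hu₁ y.1 fun i => congrArg Prod.fst (hy i)
      have h₂ : y.2 = t₂ := hu₂ y.2 fun i => congrArg Prod.snd (hy i)
      exact Prod.ext h₁ h₂

/-- A sheaf of modules is trivial (zero) if all its section modules are trivial. -/
def IsZeroOMod (M : OMod O) : Prop := ∀ U, Subsingleton (M.obj U)

/-- An isomorphism of sheaves of modules. -/
structure OModIso (M N : OMod O) where
  hom : M ⟶ N
  inv : N ⟶ M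
  hom_inv : hom ≫ inv = 𝟙 M
  inv_hom : inv ≫ hom = 𝟙 N

/-- A sheaf of modules is indecomposable if it is nonzero and in any direct sum
decomposition one of the summands is zero. -/
def IndecomposableOMod (M : OMod O) : Prop :=
  (¬ IsZeroOMod M) ∧
    ∀ (A B : OMod O), Nonempty (OModIso M (prod2 A B)) → IsZeroOMod A ∨ IsZeroOMod B

/-- The canonical morphism from `M` to the skyscraper at `x` with value the stalk `M_x`. -/
def toSkyStalk (M : OMod O) (x : X) : M ⟶ (sky x (Stalk M x) : OMod O) where
  app U :=
    { toFun := fun m h => germ ⟨U, h.down⟩ m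
      map_add' := fun m₁ m₂ => funext fun h => germ_add _ _ _
      map_smul' := fun r m => funext fun h => by
        show germ ⟨U, h.down⟩ (r • m) = O.germHom ⟨U, h.down⟩ r • germ ⟨U, h.down⟩ m
        exact germ_smul _ _ _ }
  naturality {U V} h m := by
    funext hv
    show germ ⟨U, h hv.down⟩ m = germ ⟨V, hv.down⟩ (M.res h m)
    exact (germ_res (N₁ := ⟨U, h hv.down⟩) (N₂ := ⟨V, hv.down⟩) h m).symm

end SheafPurity

namespace SheafPurity

section ModuleTheory

variable {R : Type u} [CommRing R]

lemma IsPureMono.of_comp {A B C : Type u} [AddCommGroup A] [Module R A]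
    [AddCommGroup B] [Module R B] [AddCommGroup C] [Module R C]
    {f : A →ₗ[R] B} {g : B →ₗ[R] C} (h : IsPureMono (g.comp f)) : IsPureMono f := by
  refine ⟨fun a a' hab => h.1 (by simp [LinearMap.comp_apply, hab]), ?_⟩
  intro m n G a b hb
  refine h.2 m n G a (fun j => g (b j)) fun i => ?_
  rw [LinearMap.comp_apply, ← hb i, map_sum]
  simp_rw [map_smul]

open TensorProduct in
lemma helperExact {B F N : Type u} [AddCommGroup B] [Module R B]
    [AddCommGroup F] [Module R F] [AddCommGroup N] [Module R N]
    (π : F →ₗ[R] N) (hπs : Function.Surjective π) :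
    Function.Exact (LinearMap.lTensor B (LinearMap.ker π).subtype)
      (LinearMap.lTensor B π) := lTensor_exact B π.exact_subtype_ker_map hπs

set_option maxHeartbeats 1000000 in
open TensorProduct in
theorem rTensor_injective_of_isPureMono {A B : Type u} [AddCommGroup A] [Module R A]
    [AddCommGroup B] [Module R B] {f : A →ₗ[R] B} (hf : IsPureMono f)
    (N : Type u) [AddCommGroup N] [Module R N] :
    Function.Injective (f.rTensor N) := by
  classical
  rw [← LinearMap.ker_eq_bot, LinearMap.ker_eq_bot']
  intro t ht
  -- write t as a finite sum of pure tensors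
  obtain ⟨s, rfl⟩ := TensorProduct.exists_finset t
  -- the big free module over N
  set π : (N →₀ R) →ₗ[R] N := Finsupp.linearCombination R id with hπ
  have hπs : Function.Surjective π := Finsupp.linearCombination_id_surjective R N
  have hexact : Function.Exact (LinearMap.lTensor B (LinearMap.ker π).subtype)
      (LinearMap.lTensor B π) := helperExact π hπs
  -- the canonical lift of t
  set ttil : A ⊗[R] (N →₀ R) := ∑ p ∈ s, p.1 ⊗ₜ Finsupp.single p.2 1 with httil
  have hlift : (LinearMap.lTensor A π) ttil = ∑ p ∈ s, p.1 ⊗ₜ p.2 := by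
    rw [httil, map_sum]
    refine Finset.sum_congr rfl fun p _ => ?_
    simp [hπ, Finsupp.linearCombination_single]
  have hker : (LinearMap.lTensor B π) ((LinearMap.rTensor _ f) ttil) = 0 := by
    have : (LinearMap.lTensor B π).comp (LinearMap.rTensor (N →₀ R) f)
        = (LinearMap.rTensor N f).comp (LinearMap.lTensor A π) := by
      rw [LinearMap.lTensor_comp_rTensor, LinearMap.rTensor_comp_lTensor]
    have := congrArg (fun φ => φ ttil) this
    simp only [LinearMap.comp_apply] at this
    rw [this, hlift, ht]
  obtain ⟨ω, hω⟩ := (hexact _).mp hker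
  obtain ⟨sb, rfl⟩ := TensorProduct.exists_finset ω
  -- coordinates
  have coordEq : ∀ y : N,
      ∑ p ∈ s, ((Finsupp.single p.2 (1:R)) y) • f p.1
        = ∑ q ∈ sb, ((q.2 : N →₀ R) y) • q.1 := by
    intro y
    have h := congrArg (fun z => (TensorProduct.rid R B)
      ((LinearMap.lTensor B (Finsupp.lapply (M := R) y)) z)) hω
    simp only [httil, map_sum, LinearMap.rTensor_tmul, LinearMap.lTensor_tmul,
      Finsupp.lapply_apply, TensorProduct.rid_tmul, Submodule.coe_subtype] at h
    exact h.symm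
  -- merged coefficients
  set α : N → A := fun y => ∑ p ∈ s, if p.2 = y then p.1 else 0 with hα
  have hfα : ∀ y : N, f (α y) = ∑ q ∈ sb, ((q.2 : N →₀ R) y) • q.1 := by
    intro y
    rw [← coordEq y, hα, map_sum]
    refine Finset.sum_congr rfl fun p _ => ?_
    rw [Finsupp.single_apply]
    split <;> simp
  -- the finite equation system
  set Y : Finset N := s.image Prod.snd ∪ sb.sup (fun q => (q.2 : N →₀ R).support) with hY
  set eY : Fin Y.card ≃ {y // y ∈ Y} := Y.equivFin.symm with heY
  set eb : Fin sb.card ≃ {q // q ∈ sb} := sb.equivFin.symm with heb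
  set G : Matrix (Fin Y.card) (Fin sb.card) R :=
    fun i j => ((eb j).1.2 : N →₀ R) (eY i).1 with hG
  obtain ⟨a', ha'⟩ := hf.2 Y.card sb.card G (fun i => α (eY i).1) (fun j => (eb j).1.1)
    (by
      intro i
      have e1 : ∑ j : Fin sb.card, G i j • (eb j).1.1
          = ∑ q ∈ sb, ((q.2 : N →₀ R) (eY i).1) • q.1 := by
        rw [← Finset.sum_attach sb (fun q => ((q.2 : N →₀ R) (eY i).1) • q.1),
          ← Finset.univ_eq_attach]
        exact Equiv.sum_comp eb (fun q => ((q.1.2 : N →₀ R) (eY i).1) • q.1.1)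
      show ∑ j, G i j • (eb j).1.1 = f (α (eY i).1)
      rw [e1, hfα])
  -- conclude
  have hsplit : ∑ p ∈ s, p.1 ⊗ₜ[R] p.2 = ∑ y ∈ Y, α y ⊗ₜ[R] y := by
    rw [hα]
    simp_rw [TensorProduct.sum_tmul]
    rw [Finset.sum_comm]
    refine Finset.sum_congr rfl fun p hp => Eq.symm ?_
    have hpY : p.2 ∈ Y := by
      rw [hY]
      exact Finset.mem_union_left _ (Finset.mem_image_of_mem _ hp)
    calc ∑ y ∈ Y, (if p.2 = y then p.1 else 0) ⊗ₜ[R] y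
        = ∑ y ∈ Y, (if p.2 = y then p.1 ⊗ₜ[R] y else 0) := by
          refine Finset.sum_congr rfl fun y _ => ?_
          split <;> simp
      _ = ∑ y ∈ Y, (if p.2 = y then p.1 ⊗ₜ[R] p.2 else 0) := by
          refine Finset.sum_congr rfl fun y _ => ?_
          split
          · next h => rw [h]
          · rfl
      _ = p.1 ⊗ₜ[R] p.2 := by rw [Finset.sum_ite_eq]; simp [hpY]
  rw [hsplit]
  have hY2 : ∑ y ∈ Y, α y ⊗ₜ[R] y
      = ∑ i : Fin Y.card, α (eY i).1 ⊗ₜ[R] ((eY i).1 : N) := by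
    rw [← Finset.sum_attach Y (fun y => α y ⊗ₜ[R] y), ← Finset.univ_eq_attach]
    exact (Equiv.sum_comp eY (fun y => α y.1 ⊗ₜ[R] (y.1 : N))).symm
  rw [hY2]
  calc ∑ i, α (eY i).1 ⊗ₜ[R] ((eY i).1 : N)
      = ∑ i, (∑ j, G i j • a' j) ⊗ₜ[R] ((eY i).1 : N) := by
        refine Finset.sum_congr rfl fun i _ => ?_; rw [ha' i]
    _ = ∑ j, a' j ⊗ₜ[R] (∑ i, G i j • ((eY i).1 : N)) := by
        simp_rw [TensorProduct.sum_tmul, TensorProduct.smul_tmul, TensorProduct.tmul_sum,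
          TensorProduct.tmul_smul]
        rw [Finset.sum_comm]
    _ = 0 := by
        refine Finset.sum_eq_zero fun j _ => ?_
        have : ∑ i, G i j • ((eY i).1 : N) = 0 := by
          have hsupp : ((eb j).1.2 : N →₀ R).support ⊆ Y := by
            rw [hY]
            exact le_trans (Finset.le_sup (f := fun q => ((q.2 : N →₀ R)).support) (eb j).2)
              Finset.subset_union_right
          have h1 : ∑ i : Fin Y.card, G i j • ((eY i).1 : N)
              = ∑ y ∈ Y, ((eb j).1.2 : N →₀ R) y • y := by
            rw [← Finset.sum_attach Y (fun y => ((eb j).1.2 : N →₀ R) y • y),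
              ← Finset.univ_eq_attach]
            exact Equiv.sum_comp eY (fun y => ((eb j).1.2 : N →₀ R) y.1 • (y.1 : N))
          have h2 : π ((eb j).1.2 : N →₀ R) = ∑ y ∈ Y, ((eb j).1.2 : N →₀ R) y • y := by
            have e : π ((eb j).1.2 : N →₀ R)
                = ((eb j).1.2 : N →₀ R).sum fun i a => a • (id i : N) :=
              Finsupp.linearCombination_apply R _
            rw [e, Finsupp.sum_of_support_subset _ hsupp _ (fun y _ => zero_smul R y)]
            rfl
          rw [h1, ← h2]
          exact LinearMap.mem_ker.mp (eb j).1.2.2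
        rw [this, TensorProduct.tmul_zero]

theorem pureInjective_characterModule (N : Type u) [AddCommGroup N] [Module R N] :
    PureInjectiveModule R (CharacterModule N) := by
  intro A B _ _ _ _ f hf g
  have hinj : Function.Injective (f.rTensor N) := rTensor_injective_of_isPureMono hf N
  obtain ⟨c, hc⟩ := CharacterModule.dual_surjective_of_injective (f.rTensor N) hinj
    (CharacterModule.homEquiv g)
  refine ⟨CharacterModule.homEquiv.symm c, ?_⟩
  have key := congrArg (fun (Φ : (B →ₗ[R] CharacterModule N) →ₗ[R]
      (A →ₗ[R] CharacterModule N)) => Φ (CharacterModule.homEquiv.symm c))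
    (CharacterModule.dual_rTensor_conj_homEquiv (A' := B) (B := N) f)
  simp only [LinearMap.comp_apply, LinearEquiv.coe_coe, LinearMap.lcomp_apply'] at key
  rw [LinearEquiv.apply_symm_apply] at key
  rw [← key, hc, LinearEquiv.symm_apply_apply]

/-- The canonical map into the double character dual. -/
def doubleDual (S : Type u) [AddCommGroup S] [Module R S] :
    S →ₗ[R] CharacterModule (CharacterModule S) where
  toFun a :=
    { toFun := fun c => c a
      map_zero' := rfl
      map_add' := fun _ _ => rfl }
  map_add' a a' := by ext c; exact map_add c a a'
  map_smul' r a := by ext c; rfl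

@[simp] lemma doubleDual_apply {S : Type u} [AddCommGroup S] [Module R S]
    (a : S) (c : CharacterModule S) : doubleDual (R := R) S a c = c a := rfl

lemma char_sum_apply {A : Type u} [AddCommGroup A] {ι : Type*} (t : Finset ι)
    (c : ι → CharacterModule A) (a : A) : (∑ i ∈ t, c i) a = ∑ i ∈ t, c i a := by
  classical
  induction t using Finset.cons_induction with
  | empty => rfl
  | cons x t hx ih => rw [Finset.sum_cons, Finset.sum_cons, ← ih]; rfl

theorem isPureMono_doubleDual (S : Type u) [AddCommGroup S] [Module R S] :
    IsPureMono (doubleDual (R := R) S) := by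
  classical
  constructor
  · intro a a' hab
    have h0 : ∀ c : CharacterModule S, c (a - a') = 0 := by
      intro c
      have := congrArg (fun φ : CharacterModule (CharacterModule S) => φ c) hab
      simp only [doubleDual_apply] at this
      rw [map_sub, this, sub_self]
    exact sub_eq_zero.mp (CharacterModule.eq_zero_of_character_apply h0)
  · intro m n G a b hb
    set Gm : (Fin n → S) →ₗ[R] (Fin m → S) :=
      { toFun := fun z i => ∑ j, G i j • z j
        map_add' := fun z z' => by
          funext i
          simp [smul_add, Finset.sum_add_distrib]
        map_smul' := fun r z => by
          funext i
          show ∑ j, G i j • (r • z) j = _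
          simp only [RingHom.id_apply, Pi.smul_apply, Finset.smul_sum]
          exact Finset.sum_congr rfl fun j _ => smul_comm _ _ _ } with hGm
    suffices h : a ∈ LinearMap.range Gm by
      obtain ⟨z, hz⟩ := h
      exact ⟨z, fun i => congrFun hz i⟩
    rw [← Submodule.Quotient.mk_eq_zero]
    apply CharacterModule.eq_zero_of_character_apply
    intro c
    set χ : (Fin m → S) →+ AddCircle (1:ℚ) :=
      (c : ((Fin m → S) ⧸ LinearMap.range Gm) →+ AddCircle (1:ℚ)).comp
        (LinearMap.range Gm).mkQ.toAddMonoidHom with hχ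
    have hχ0 : ∀ z ∈ LinearMap.range Gm, χ z = 0 := by
      intro z hz
      have hz0 : (LinearMap.range Gm).mkQ z = 0 := by
        rwa [Submodule.mkQ_apply, Submodule.Quotient.mk_eq_zero]
      show c ((LinearMap.range Gm).mkQ z) = 0
      rw [hz0, map_zero]
    set χc : Fin m → CharacterModule S := fun i =>
      χ.comp (LinearMap.single R (fun _ => S) i).toAddMonoidHom with hχc
    have hdecomp : ∀ v : Fin m → S, χ v = ∑ i, χc i (v i) := by
      intro v
      have hv : v = ∑ i, Pi.single i (v i) := by
        funext k
        symm
        rw [Finset.sum_apply, Finset.sum_pi_single]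
        simp
      calc χ v = χ (∑ i, Pi.single i (v i)) := by rw [← hv]
        _ = ∑ i, χ (Pi.single i (v i)) := map_sum χ _ _
        _ = ∑ i, χc i (v i) := rfl
    show χ a = 0
    rw [hdecomp]
    have hstep : ∀ i, χc i (a i) = ∑ j, (b j) ((G i j : R) • χc i) := by
      intro i
      have h1 := congrArg (fun φ : CharacterModule (CharacterModule S) => φ (χc i)) (hb i)
      simp only [doubleDual_apply] at h1
      rw [← h1, char_sum_apply]
      refine Finset.sum_congr rfl fun j _ => ?_
      rfl
    simp_rw [hstep]
    rw [Finset.sum_comm]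
    refine Finset.sum_eq_zero fun j _ => ?_
    have hzero : ∑ i, (G i j : R) • χc i = (0 : CharacterModule S) := by
      ext s
      rw [char_sum_apply]
      simp only [CharacterModule.smul_apply]
      have h2 : ∀ i, χc i (G i j • s) = χ (Pi.single i (G i j • s)) := fun _ => rfl
      simp_rw [h2, ← map_sum]
      have h3 : (∑ i, Pi.single i (G i j • s)) = Gm (Pi.single j s) := by
        funext k
        rw [Finset.sum_apply]
        simp only [hGm, LinearMap.coe_mk, AddHom.coe_mk]
        rw [Finset.sum_pi_single]
        simp [Pi.single_apply, smul_ite]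
      rw [h3, hχ0 _ ⟨Pi.single j s, rfl⟩]
      rfl
    have h4 : ∑ i, (b j) ((G i j : R) • χc i) = (b j) (∑ i, (G i j : R) • χc i) :=
      (map_sum (b j) _ _).symm
    rw [h4, hzero, map_zero]

theorem exists_pure_embedding_pureInjective (R : Type u) [CommRing R]
    (S : Type u) [AddCommGroup S] [Module R S] :
    ∃ (A : Type u) (_ : AddCommGroup A) (_ : Module R A) (ι : S →ₗ[R] A),
      IsPureMono ι ∧ PureInjectiveModule R A :=
  ⟨CharacterModule (CharacterModule S), inferInstance, inferInstance,
    doubleDual S, isPureMono_doubleDual S, pureInjective_characterModule _⟩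


theorem exists_hull (R : Type u) [CommRing R]
    (S : Type u) [AddCommGroup S] [Module R S] :
    ∃ (A : ModuleCat.{u} R) (ι : S →ₗ[R] A), IsPureMono ι ∧ PureInjectiveModule R A :=
  ⟨ModuleCat.of R (CharacterModule (CharacterModule S)), doubleDual S,
    isPureMono_doubleDual S, pureInjective_characterModule _⟩

end ModuleTheory

end SheafPurity

namespace SheafPurity

variable {X : Type u} [TopologicalSpace X] {O : RingSheaf X}

/-! ## Products of sheaves of modules -/

/-- The product of a family of sheaves of modules. -/
def prodOMod {ι : Type u} (F : ι → OMod O) : OMod O where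
  obj U := ∀ i, (F i).obj U
  acg U := inferInstance
  mod U := inferInstance
  res {U V} h :=
    { toFun := fun s i => (F i).res h (s i)
      map_zero' := by funext i; exact map_zero _
      map_add' := fun s t => by funext i; exact map_add _ _ _ }
  res_id s := by funext i; exact (F i).res_id _
  res_res h1 h2 s := by funext i; exact (F i).res_res _ _ _
  res_smul h r m := by funext i; exact (F i).res_smul h r (m i)
  sheaf := by
    intro κ U V hU s compat
    have H := fun i => (F i).sheaf κ U V hU (fun j => s j i)
      (fun j j' W hWi hWj => congrFun (compat j j' W hWi hWj) i)
    choose t ht using H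
    exact ⟨fun i => t i, fun j => funext fun i => (ht i).1 j,
      fun y hy => funext fun i => (ht i).2 (y i) (fun j => congrFun (hy j) i)⟩

/-- Projection from the product. -/
def prodProj {ι : Type u} (F : ι → OMod O) (i : ι) : prodOMod F ⟶ F i where
  app U := LinearMap.proj i
  naturality h m := rfl

/-- The universal map into the product. -/
def prodLift {ι : Type u} {F : ι → OMod O} {Q : OMod O} (q : ∀ i, Q ⟶ F i) :
    Q ⟶ prodOMod F where
  app U := LinearMap.pi (fun i => Hom.app (q i) U)
  naturality {U V} h m := by funext i; exact Hom.naturality (q i) h m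

lemma prodLift_proj {ι : Type u} {F : ι → OMod O} {Q : OMod O} (q : ∀ i, Q ⟶ F i) (i : ι) :
    prodLift q ≫ prodProj F i = q i := by
  apply Hom.ext; rfl

lemma prod_hom_ext {ι : Type u} {F : ι → OMod O} {Q : OMod O} (g g' : Q ⟶ prodOMod F)
    (h : ∀ i, g ≫ prodProj F i = g' ≫ prodProj F i) : g = g' := by
  apply Hom.ext
  funext U
  apply LinearMap.ext
  intro mq
  funext i
  exact congrArg (fun ψ => Hom.app ψ U mq) (h i)

/-! ## The stalk-skyscraper adjunction -/

section Adjunction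

variable {x : X} {A : Type u} [AddCommGroup A] [Module (RStalk O x) A]

/-- Evaluation of the stalk of a skyscraper sheaf at its point. -/
def skyEval : Stalk (sky x A : OMod O) x →ₗ[RStalk O x] A where
  toFun := Quot.lift (fun a => a.2 ⟨a.1.mem⟩) (by
    rintro a b ⟨W, h₁, h₂, he⟩
    have h := congrFun he (⟨W.mem⟩ : PLift (x ∈ W.U))
    show a.2 ⟨a.1.mem⟩ = b.2 ⟨b.1.mem⟩
    calc a.2 ⟨a.1.mem⟩ = a.2 ⟨h₁ W.mem⟩ := congrArg a.2 (Subsingleton.elim _ _)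
      _ = b.2 ⟨h₂ W.mem⟩ := h
      _ = b.2 ⟨b.1.mem⟩ := congrArg b.2 (Subsingleton.elim _ _))
  map_add' a b := by
    obtain ⟨N₁, s₁, rfl⟩ := germ_surj a
    obtain ⟨N₂, s₂, rfl⟩ := germ_surj b
    rw [add_germ']
    show (_ + _ : PLift (x ∈ (N₁.inf N₂).U) → A) ⟨(N₁.inf N₂).mem⟩ = _
    show s₁ ⟨Nbhd.inf_le_left N₁ N₂ (N₁.inf N₂).mem⟩
        + s₂ ⟨Nbhd.inf_le_right N₁ N₂ (N₁.inf N₂).mem⟩ = _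
    rw [congrArg s₁ (Subsingleton.elim _ (⟨N₁.mem⟩ : PLift (x ∈ N₁.U))),
      congrArg s₂ (Subsingleton.elim _ (⟨N₂.mem⟩ : PLift (x ∈ N₂.U)))]
    rfl
  map_smul' r a := by
    obtain ⟨N₁, rr, rfl⟩ := germ_surj r
    obtain ⟨N₂, s, rfl⟩ := germ_surj a
    rw [smul_germ]
    show (O.germHom ⟨(N₁.inf N₂).U, (N₁.inf N₂).mem⟩ (O.res (N₁.inf_le_left N₂) rr)) •
      ((sky x A : OMod O).res (N₁.inf_le_right N₂) s) ⟨(N₁.inf N₂).mem⟩ = _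
    have h1 : O.germHom (x := x) ⟨(N₁.inf N₂).U, (N₁.inf N₂).mem⟩
        (O.res (N₁.inf_le_left N₂) rr) = O.germHom N₁ rr := by
      rw [germHom_apply, germHom_apply]
      exact germ_res_ring (N₁ := N₁) (N₂ := ⟨(N₁.inf N₂).U, (N₁.inf N₂).mem⟩)
        (N₁.inf_le_left N₂) rr
    rw [h1]
    show O.germHom N₁ rr • s ⟨Nbhd.inf_le_right N₁ N₂ (N₁.inf N₂).mem⟩ = _
    rw [congrArg s (Subsingleton.elim _ (⟨N₂.mem⟩ : PLift (x ∈ N₂.U)))]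
    rfl

@[simp] lemma skyEval_germ (N : Nbhd x) (s : (sky x A : OMod O).obj N.U) :
    skyEval (germ N s) = s ⟨N.mem⟩ := rfl

variable {Q : OMod O}

/-- The linear map on stalks induced by a map to a skyscraper. -/
def stalkToA (q : Q ⟶ (sky x A : OMod O)) : Stalk Q x →ₗ[RStalk O x] A :=
  skyEval.comp (stalkMap q x)

/-- The map to a skyscraper induced by a linear map on stalks. -/
def fromLinear (ψ : Stalk Q x →ₗ[RStalk O x] A) : Q ⟶ (sky x A : OMod O) :=
  toSkyStalk Q x ≫ skyMap ψ

lemma fromLinear_stalkToA (q : Q ⟶ (sky x A : OMod O)) : fromLinear (stalkToA q) = q := by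
  apply Hom.ext
  funext U
  apply LinearMap.ext
  intro m
  funext h
  rfl

lemma stalkToA_fromLinear (ψ : Stalk Q x →ₗ[RStalk O x] A) : stalkToA (fromLinear ψ) = ψ := by
  apply LinearMap.ext
  intro t
  induction t using Quot.ind with
  | _ a => rfl

lemma stalkToA_comp {Q' : OMod O} (u : Q' ⟶ Q) (q : Q ⟶ (sky x A : OMod O)) :
    stalkToA (u ≫ q) = (stalkToA q).comp (stalkMap u x) := by
  apply LinearMap.ext
  intro t
  induction t using Quot.ind with
  | _ a => rfl

lemma comp_fromLinear {Q' : OMod O} (u : Q' ⟶ Q) (ψ : Stalk Q x →ₗ[RStalk O x] A) :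
    u ≫ fromLinear ψ = fromLinear (ψ.comp (stalkMap u x)) := by
  apply Hom.ext
  funext U
  apply LinearMap.ext
  intro m
  funext h
  rfl

end Adjunction

/-! ## Sections with all germs zero vanish -/

lemma germRel_equivalence (M : OMod O) (x : X) : Equivalence (germRel M x) := by
  constructor
  · intro a
    exact ⟨a.1, le_rfl, le_rfl, rfl⟩
  · rintro a b ⟨W, h₁, h₂, he⟩
    exact ⟨W, h₂, h₁, he.symm⟩
  · rintro a b c ⟨W, h₁, h₂, he⟩ ⟨W', h₁', h₂', he'⟩
    refine ⟨W.inf W', (W.inf_le_left W').trans h₁, (W.inf_le_right W').trans h₂', ?_⟩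
    calc M.res ((W.inf_le_left W').trans h₁) a.2
        = M.res (W.inf_le_left W') (M.res h₁ a.2) := (M.res_res _ _ _).symm
      _ = M.res (W.inf_le_left W') (M.res h₂ b.2) := by rw [he]
      _ = M.res ((W.inf_le_left W').trans h₂) b.2 := M.res_res _ _ _
      _ = M.res ((W.inf_le_right W').trans h₁') b.2 := rfl
      _ = M.res (W.inf_le_right W') (M.res h₁' b.2) := (M.res_res _ _ _).symm
      _ = M.res (W.inf_le_right W') (M.res h₂' c.2) := by rw [he']
      _ = M.res ((W.inf_le_right W').trans h₂') c.2 := M.res_res _ _ _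

lemma germ_eq_exact {M : OMod O} {x : X} {N₁ N₂ : Nbhd x} {s₁ : M.obj N₁.U}
    {s₂ : M.obj N₂.U} (h : (germ N₁ s₁ : Stalk M x) = germ N₂ s₂) :
    germRel M x ⟨N₁, s₁⟩ ⟨N₂, s₂⟩ :=
  ((germRel_equivalence M x).eqvGen_iff).mp (Quot.eq.mp h)

lemma germ_eq_zero_locally {M : OMod O} {x : X} {N : Nbhd x} {s : M.obj N.U}
    (h : (germ N s : Stalk M x) = 0) :
    ∃ (W : Nbhd x) (hW : W.U ≤ N.U), M.res hW s = 0 := by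
  have h' := germ_eq_exact (h.trans rfl : (germ N s : Stalk M x) = germ (default : Nbhd x) 0)
  obtain ⟨W, h₁, h₂, he⟩ := h'
  exact ⟨W, h₁, by rw [he, map_zero]⟩

lemma section_eq_zero_of_germs {M : OMod O} {U : Opens X} (m : M.obj U)
    (h : ∀ (x : X) (hx : x ∈ U), (germ ⟨U, hx⟩ m : Stalk M x) = 0) : m = 0 := by
  have hloc : ∀ p : ↥U, ∃ (W : Nbhd (p : X)) (hW : W.U ≤ U), M.res hW m = 0 :=
    fun p => germ_eq_zero_locally (h p p.2)
  choose W hW hres using hloc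
  set V : ↥U → Opens X := fun p => (W p).U with hV
  have hU : U = iSup V := by
    apply le_antisymm
    · intro z hz
      exact Opens.mem_iSup.mpr ⟨⟨z, hz⟩, (W ⟨z, hz⟩).mem⟩
    · exact iSup_le fun p => hW p
  have hsheaf := M.sheaf ↥U U V hU (fun p => 0)
    (fun p p' W' hWi hWj => by
      show M.res hWi (0 : M.obj (V p)) = M.res hWj (0 : M.obj (V p'))
      rw [map_zero, map_zero])
  refine hsheaf.unique (fun p => ?_) (fun p => map_zero _)
  exact hres p

end SheafPurity

open SheafPurity CategoryTheory in
/-- Every `O_X`-module `M` on a ringed space `X` admits a g-pure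
monomorphism into a g-pure-injective `O_X`-module, which can be chosen to be a product
of skyscraper sheaves of pure-injective modules over the stalk rings. -/
theorem exists_gPure_embedding_into_gPureInjective
    {X : Type u} [TopologicalSpace X] (O : RingSheaf X) (M : OMod O) :
    ∃ (P : OMod O) (f : M ⟶ P), IsGPureMono f ∧ GPureInjective P ∧
      ∃ (A : ∀ x : X, ModuleCat.{u} (RStalk O x))
        (p : ∀ x : X, P ⟶ (sky x (A x) : OMod O)),
        (∀ x : X, PureInjectiveModule (RStalk O x) (A x)) ∧
        ∀ (Q : OMod O) (q : ∀ x : X, Q ⟶ (sky x (A x) : OMod O)),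
          ∃! g : Q ⟶ P, ∀ x, g ≫ p x = q x := by
  classical
  choose A ι hpure hPI using fun x : X => exists_hull (RStalk O x) (Stalk M x)
  set q : ∀ x : X, M ⟶ (sky x (A x) : OMod O) := fun x => fromLinear (ι x) with hq
  set f : M ⟶ prodOMod (fun x => sky x (A x)) := prodLift q with hf
  have hfp : ∀ x, f ≫ prodProj _ x = q x := fun x => prodLift_proj q x
  refine ⟨prodOMod (fun x => sky x (A x)), f, ⟨?_, ?_⟩, ?_, A,
    fun x => prodProj _ x, hPI, ?_⟩
  · -- injectivity on sections
    intro U m₁ m₂ hm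
    have hz : Hom.app f U (m₁ - m₂) = 0 := by rw [map_sub, hm, sub_self]
    have hsub : m₁ - m₂ = 0 := by
      apply section_eq_zero_of_germs
      intro x hx
      apply (hpure x).1
      have h0 : ι x (germ ⟨U, hx⟩ (m₁ - m₂)) = 0 := congrFun (congrFun hz x) ⟨hx⟩
      rw [map_zero]
      exact h0
    exact sub_eq_zero.mp hsub
  · -- purity on stalks
    intro x
    have h1 : stalkToA (f ≫ prodProj _ x)
        = (stalkToA (prodProj _ x)).comp (stalkMap f x) := stalkToA_comp f _
    rw [hfp x, hq] at h1
    rw [stalkToA_fromLinear] at h1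
    exact IsPureMono.of_comp
      (show IsPureMono ((stalkToA (prodProj (fun x => sky x (A x)) x)).comp (stalkMap f x))
        from h1 ▸ hpure x)
  · -- g-pure-injectivity of the product
    intro M' N' u hu φ
    have hη : ∀ x : X, ∃ η : Stalk N' x →ₗ[RStalk O x] (A x),
        η.comp (stalkMap u x) = stalkToA (φ ≫ prodProj _ x) :=
      fun x => hPI x _ _ (stalkMap u x) (hu.2 x) (stalkToA (φ ≫ prodProj _ x))
    choose η hη using hη
    refine ⟨prodLift (fun x => fromLinear (η x)), ?_⟩
    apply prod_hom_ext
    intro x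
    rw [Category.assoc, prodLift_proj]
    rw [comp_fromLinear, hη x, fromLinear_stalkToA]
  · -- the universal property of the product
    intro Q qq
    exact ⟨prodLift qq, fun x => prodLift_proj qq x,
      fun g hg => prod_hom_ext g (prodLift qq) (fun x => by rw [hg x, prodLift_proj])⟩
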